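/- Let x_0, ..., x_n be affinely independent points in ℝ^n with convex hull σ, and let c_j = (n/2)·‖x_j − x_0‖₂·(max_k ‖x_k − x_0‖₂ + ‖x_j − x_0‖₂). Let f : ℝ^n → ℝ^n be twice continuously differentiable on a neighborhood of σ with all second partial derivatives of all components bounded in absolute value by β on σ, and let G : ℝ^n → ℝ^{n×m} be continuous with ‖G(x)‖_∞ ≤ ĝ for all x ∈ σ, where ‖·‖_∞ is the induced ∞-norm. Let w ∈ ℝ^n, let l̂ ∈ ℝ satisfy ‖w‖₁ ≤ l̂, let û > 0 and b₂ ∈ ℝ. If f(x_j) · w + l̂·(β c_j + ĝ û) ≤ −b₂ for every vertex j = 0, ..., n, then for every x ∈ σ and every u ∈ ℝ^m with ‖u‖_∞ ≤ û: w · (f(x) + G(x) u) ≤ −b₂. -/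

import Mathlib

open scoped BigOperators

/-- The second partial derivative `∂²φ/∂x^(q)∂x^(r)` of a scalar function on `ℝ^n`. -/
noncomputable def secondPartial {n : ℕ} (φ : EuclideanSpace ℝ (Fin n) → ℝ)
    (ξ : EuclideanSpace ℝ (Fin n)) (q r : Fin n) : ℝ :=
  fderiv ℝ (fun z => fderiv ℝ φ z (EuclideanSpace.single q (1 : ℝ))) ξ
    (EuclideanSpace.single r (1 : ℝ))

/-- The constant `c_j = (n/2)·‖x_j − x_0‖₂·(max_{k∈{1,…,n}} ‖x_k − x_0‖₂ + ‖x_j − x_0‖₂)`. -/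
noncomputable def simplexConst {n : ℕ} (x : Fin (n + 1) → EuclideanSpace ℝ (Fin n))
    (j : Fin (n + 1)) : ℝ :=
  ((n : ℝ) / 2) * ‖x j - x 0‖ * ((⨆ k : Fin n, ‖x k.succ - x 0‖) + ‖x j - x 0‖)

/-- The operator norm induced by the vector `∞`-norm: the maximum absolute row sum. -/
noncomputable def matInfNorm {n m : ℕ} (A : Matrix (Fin n) (Fin m) ℝ) : ℝ :=
  ⨆ i, ∑ j, |A i j|

lemma euc_decomp {n : ℕ} (v : EuclideanSpace ℝ (Fin n)) :
    v = ∑ r, v r • EuclideanSpace.single r (1 : ℝ) := by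
  ext i
  rw [WithLp.ofLp_sum, Finset.sum_apply]
  simp [EuclideanSpace.single_apply]

lemma bilin_expand {n : ℕ} (B : EuclideanSpace ℝ (Fin n) →L[ℝ] EuclideanSpace ℝ (Fin n) →L[ℝ] ℝ)
    (v : EuclideanSpace ℝ (Fin n)) :
    B v v = ∑ r, ∑ q, v r * v q * B (EuclideanSpace.single r 1) (EuclideanSpace.single q 1) := by
  have h2 : B v = ∑ r, v r • B (EuclideanSpace.single r 1) := by
    conv_lhs => rw [euc_decomp v]
    rw [map_sum]
    simp
  rw [h2]
  rw [ContinuousLinearMap.coe_sum', Finset.sum_apply]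
  refine Finset.sum_congr rfl fun r _ => ?_
  rw [ContinuousLinearMap.coe_smul', Pi.smul_apply, smul_eq_mul]
  have h3 : (B (EuclideanSpace.single r 1)) v
      = ∑ q, v q * B (EuclideanSpace.single r 1) (EuclideanSpace.single q 1) := by
    conv_lhs => rw [euc_decomp v]
    rw [map_sum]
    simp
  rw [h3, Finset.mul_sum]
  refine Finset.sum_congr rfl fun q _ => ?_
  ring

lemma bilin_bound {n : ℕ} (B : EuclideanSpace ℝ (Fin n) →L[ℝ] EuclideanSpace ℝ (Fin n) →L[ℝ] ℝ)
    (v : EuclideanSpace ℝ (Fin n)) (β : ℝ)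
    (hB : ∀ q r : Fin n, |B (EuclideanSpace.single r 1) (EuclideanSpace.single q 1)| ≤ β) :
    |B v v| ≤ β * (∑ q, |v q|) ^ 2 := by
  rw [bilin_expand]
  calc |∑ r, ∑ q, v r * v q * B (EuclideanSpace.single r 1) (EuclideanSpace.single q 1)|
      ≤ ∑ r, ∑ q, |v r| * |v q| * β := by
        refine (Finset.abs_sum_le_sum_abs _ _).trans (Finset.sum_le_sum fun r _ => ?_)
        refine (Finset.abs_sum_le_sum_abs _ _).trans (Finset.sum_le_sum fun q _ => ?_)
        rw [abs_mul, abs_mul]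
        exact mul_le_mul_of_nonneg_left (hB q r) (by positivity)
    _ = β * (∑ q, |v q|) ^ 2 := by
        rw [sq]
        rw [Finset.sum_mul_sum]
        rw [Finset.mul_sum]
        refine Finset.sum_congr rfl fun r _ => ?_
        rw [Finset.mul_sum]
        refine Finset.sum_congr rfl fun q _ => ?_
        ring


lemma taylor_bound {n : ℕ} (U : Set (EuclideanSpace ℝ (Fin n))) (hU : IsOpen U)
    (K : Set (EuclideanSpace ℝ (Fin n))) (hK : Convex ℝ K) (hKU : K ⊆ U)
    (φ : EuclideanSpace ℝ (Fin n) → ℝ) (hφ : ContDiffOn ℝ 2 φ U) (β : ℝ)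
    (hβ : ∀ ξ ∈ K, ∀ q r, |secondPartial φ ξ q r| ≤ β)
    (x₀ y : EuclideanSpace ℝ (Fin n)) (hx₀ : x₀ ∈ K) (hy : y ∈ K) :
    |φ y - φ x₀ - fderiv ℝ φ x₀ (y - x₀)| ≤ β / 2 * (∑ q, |(y - x₀) q|) ^ 2 := by
  set v := y - x₀ with hv
  set F := fun z => fderiv ℝ φ z with hF
  set A := fun z => fderiv ℝ F z with hA
  have hcd2 : ∀ z ∈ K, ContDiffAt ℝ 2 φ z := fun z hz => hφ.contDiffAt (hU.mem_nhds (hKU hz))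
  have hd1 : ∀ z ∈ K, DifferentiableAt ℝ φ z := fun z hz =>
    (hcd2 z hz).differentiableAt (by norm_num)
  have hd2 : ∀ z ∈ K, DifferentiableAt ℝ F z := fun z hz =>
    ((hcd2 z hz).fderiv_right (m := 1) (by norm_num)).differentiableAt (by norm_num)
  -- second partials identify with iterated fderiv entries
  have hsp : ∀ ξ ∈ K, ∀ q r : Fin n, secondPartial φ ξ q r
      = A ξ (EuclideanSpace.single r 1) (EuclideanSpace.single q 1) := by
    intro ξ hξ q r
    have h1 : HasFDerivAt (fun z => F z (EuclideanSpace.single q (1:ℝ)))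
        ((A ξ).flip (EuclideanSpace.single q 1)) ξ := by
      have := (hd2 ξ hξ).hasFDerivAt.clm_apply
        (hasFDerivAt_const (EuclideanSpace.single q (1:ℝ)) ξ)
      simpa using this
    have h2 := h1.fderiv
    simp only [secondPartial, h2]
    exact congrArg (fun L => L (EuclideanSpace.single r 1)) h2
  -- the path
  set γ : ℝ → EuclideanSpace ℝ (Fin n) := fun t => x₀ + t • v with hγdef
  have hseg : ∀ t ∈ Set.Icc (0:ℝ) 1, γ t ∈ K := by
    intro t ht
    have h := hK hx₀ hy (by linarith [ht.1, ht.2] : (0:ℝ) ≤ 1 - t) ht.1 (by ring)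
    convert h using 1
    simp only [hγdef, hv]
    module
  have hγ : ∀ t : ℝ, HasDerivAt γ v t := by
    intro t
    have h := ((hasDerivAt_id t).smul_const v).const_add x₀
    simp only [one_smul] at h
    exact h
  set g : ℝ → ℝ := fun t => φ (γ t) with hgdef
  set g1 : ℝ → ℝ := fun t => F (γ t) v with hg1def
  have hg : ∀ t ∈ Set.Icc (0:ℝ) 1, HasDerivAt g (g1 t) t := fun t ht =>
    (hd1 _ (hseg t ht)).hasFDerivAt.comp_hasDerivAt t (hγ t)
  have hg1 : ∀ t ∈ Set.Icc (0:ℝ) 1, HasDerivAt g1 (A (γ t) v v) t := by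
    intro t ht
    have h := ((hd2 _ (hseg t ht)).hasFDerivAt.comp_hasDerivAt t (hγ t)).clm_apply
      (hasDerivAt_const t v)
    simpa using h
  set B := β * (∑ q, |v q|) ^ 2 with hBdef
  have hquad : ∀ t ∈ Set.Icc (0:ℝ) 1, |A (γ t) v v| ≤ B :=
    fun t ht => bilin_bound _ _ _ (fun q r => by
      rw [← hsp _ (hseg t ht) q r]; exact hβ _ (hseg t ht) q r)
  -- Lipschitz bound on g1
  have hlip : ∀ t ∈ Set.Icc (0:ℝ) 1, |g1 t - g1 0| ≤ B * t := by
    intro t ht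
    have := Convex.norm_image_sub_le_of_norm_hasDerivWithin_le
      (f := g1) (f' := fun t => A (γ t) v v) (s := Set.Icc (0:ℝ) 1) (C := B)
      (fun s hs => (hg1 s hs).hasDerivWithinAt)
      (fun s hs => by simpa [Real.norm_eq_abs] using hquad s hs)
      (convex_Icc 0 1) (Set.left_mem_Icc.2 zero_le_one) ht
    simpa [Real.norm_eq_abs, abs_of_nonneg ht.1] using this
  -- continuity of g1 on [0,1]
  have hFc : ContinuousOn F U := hφ.continuousOn_fderiv_of_isOpen hU (by norm_num)
  have hγc : Continuous γ := by
    apply Continuous.add continuous_const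
    exact (continuous_id.smul continuous_const)
  have hg1c : ContinuousOn g1 (Set.Icc (0:ℝ) 1) := by
    have h1 : ContinuousOn (fun t => F (γ t)) (Set.Icc (0:ℝ) 1) :=
      hFc.comp hγc.continuousOn (fun t ht => hKU (hseg t ht))
    exact h1.clm_apply continuousOn_const
  have hint : IntervalIntegrable g1 MeasureTheory.volume 0 1 :=
    (hg1c.mono (by rw [Set.uIcc_of_le zero_le_one])).intervalIntegrable
  have hftc : ∫ t in (0:ℝ)..1, g1 t = g 1 - g 0 :=
    intervalIntegral.integral_eq_sub_of_hasDerivAt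
      (fun t ht => hg t (by rwa [Set.uIcc_of_le zero_le_one] at ht)) hint
  have hconst : ∫ t in (0:ℝ)..1, g1 0 = g1 0 := by simp
  have hsub : g 1 - g 0 - g1 0 = ∫ t in (0:ℝ)..1, (g1 t - g1 0) := by
    rw [intervalIntegral.integral_sub hint intervalIntegrable_const, hftc, hconst]
  have hmain : |g 1 - g 0 - g1 0| ≤ B / 2 := by
    rw [hsub]
    have h1 : |∫ t in (0:ℝ)..1, (g1 t - g1 0)| ≤ ∫ t in (0:ℝ)..1, |g1 t - g1 0| := by
      simpa [Real.norm_eq_abs] using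
        intervalIntegral.norm_integral_le_integral_norm (f := fun t => g1 t - g1 0)
          (a := (0:ℝ)) (b := 1) zero_le_one
    refine h1.trans ?_
    have h2 : ∫ t in (0:ℝ)..1, |g1 t - g1 0| ≤ ∫ t in (0:ℝ)..1, B * t := by
      refine intervalIntegral.integral_mono_on zero_le_one ?_ ?_ ?_
      · have hg1c' : ContinuousOn g1 (Set.uIcc (0:ℝ) 1) := by
          rw [Set.uIcc_of_le zero_le_one]; exact hg1c
        exact ((hg1c'.sub continuousOn_const).abs).intervalIntegrable
      · exact (continuous_const.mul continuous_id).intervalIntegrable 0 1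
      · exact fun t ht => hlip t ht
    refine h2.trans ?_
    rw [intervalIntegral.integral_const_mul]
    rw [integral_id]
    linarith
  -- translate back
  have hg0 : g 0 = φ x₀ := by simp [hgdef, hγdef]
  have hg1' : g 1 = φ y := by
    simp only [hgdef, hγdef, one_smul, hv]
    norm_num
  have hgg : g1 0 = fderiv ℝ φ x₀ v := by simp [hg1def, hγdef, hF]
  calc |φ y - φ x₀ - fderiv ℝ φ x₀ v| = |g 1 - g 0 - g1 0| := by rw [hg0, hg1', hgg]
    _ ≤ B / 2 := hmain
    _ = β / 2 * (∑ q, |v q|) ^ 2 := by rw [hBdef]; ring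


/-- if the barrier vertex conditions
`f(x_j)·w + l̂(β c_j + ĝ û) ≤ −b₂` hold, then `w·(f(x) + G(x)u) ≤ −b₂` on the whole
simplex, for any input with `‖u‖_∞ ≤ û`. -/
theorem barrier_vertex_bound (n m : ℕ) (x : Fin (n + 1) → EuclideanSpace ℝ (Fin n))
    (hx : LinearIndependent ℝ (fun k : Fin n => x k.succ - x 0))
    (f : EuclideanSpace ℝ (Fin n) → (Fin n → ℝ)) (β : ℝ)
    (U : Set (EuclideanSpace ℝ (Fin n))) (hU : IsOpen U)
    (hσU : convexHull ℝ (Set.range x) ⊆ U)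
    (hf : ContDiffOn ℝ 2 f U)
    (hβ : ∀ ξ ∈ convexHull ℝ (Set.range x), ∀ p q r : Fin n,
      |secondPartial (fun z => f z p) ξ q r| ≤ β)
    (G : EuclideanSpace ℝ (Fin n) → Matrix (Fin n) (Fin m) ℝ)
    (hGcont : ∀ i j, Continuous fun z => G z i j)
    (ghat : ℝ) (hghat : ∀ z ∈ convexHull ℝ (Set.range x), matInfNorm (G z) ≤ ghat)
    (w : Fin n → ℝ) (lhat : ℝ) (hlhat : (∑ k, |w k|) ≤ lhat)
    (uhat b₂ : ℝ) (huhat : 0 < uhat)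
    (hvert : ∀ j : Fin (n + 1),
      (∑ k, f (x j) k * w k) + lhat * (β * simplexConst x j + ghat * uhat) ≤ -b₂)
    (lam : Fin (n + 1) → ℝ) (hlam0 : ∀ j, 0 ≤ lam j) (hlam1 : ∑ j, lam j = 1)
    (u : Fin m → ℝ) (hu : ∀ i, |u i| ≤ uhat) :
    (∑ k, w k * (f (∑ j, lam j • x j) k + (G (∑ j, lam j • x j)).mulVec u k)) ≤ -b₂ := by
  have hKc : Convex ℝ (convexHull ℝ (Set.range x)) := convex_convexHull ℝ _
  have hxK : ∀ j, x j ∈ convexHull ℝ (Set.range x) := fun j => subset_convexHull ℝ _ ⟨j, rfl⟩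
  have hlhat0 : (0:ℝ) ≤ lhat :=
    le_trans (Finset.sum_nonneg fun k _ => abs_nonneg _) hlhat
  have hghat0 : (0:ℝ) ≤ ghat :=
    le_trans (Real.iSup_nonneg fun i => Finset.sum_nonneg fun j _ => abs_nonneg _)
      (hghat (x 0) (hxK 0))
  -- degenerate case n = 0
  rcases Nat.eq_zero_or_pos n with hn | hn
  · subst hn
    have h0 := hvert 0
    simp only [Finset.univ_eq_empty, Finset.sum_empty, simplexConst] at h0 ⊢
    have : ‖x 0 - x 0‖ = 0 := by simp
    rw [this] at h0
    norm_num at h0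
    nlinarith [mul_nonneg hlhat0 (mul_nonneg hghat0 huhat.le)]
  -- main case
  set K := convexHull ℝ (Set.range x) with hK
  set xb := ∑ j, lam j • x j with hxbdef
  have hxbK : xb ∈ K := hKc.sum_mem (fun j _ => hlam0 j) hlam1 (fun j _ => hxK j)
  have hβ0 : (0:ℝ) ≤ β :=
    le_trans (abs_nonneg _) (hβ (x 0) (hxK 0) ⟨0, hn⟩ ⟨0, hn⟩ ⟨0, hn⟩)
  set M := ⨆ k : Fin n, ‖x k.succ - x 0‖ with hMdef
  have hM : ∀ j, ‖x j - x 0‖ ≤ M := by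
    intro j
    refine Fin.cases ?_ ?_ j
    · simp only [sub_self, norm_zero]
      exact Real.iSup_nonneg fun k => norm_nonneg _
    · intro k
      exact le_ciSup (f := fun k : Fin n => ‖x k.succ - x 0‖) (Set.Finite.bddAbove (Set.finite_range _)) k
  have hM0 : (0:ℝ) ≤ M := le_trans (norm_nonneg _) (hM 0)
  -- componentwise smoothness
  have hfp : ∀ p : Fin n, ContDiffOn ℝ 2 (fun z => f z p) U := fun p =>
    contDiffOn_pi.mp hf p
  -- ℓ¹-ℓ² comparison
  have hL : ∀ v : EuclideanSpace ℝ (Fin n), (∑ q, |v q|) ^ 2 ≤ (n : ℝ) * ‖v‖ ^ 2 := by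
    intro v
    have h1 : (∑ q, |v q|) ^ 2 ≤ ((Finset.univ : Finset (Fin n)).card : ℝ) * ∑ q, |v q| ^ 2 := by
      exact_mod_cast sq_sum_le_card_mul_sum_sq (s := (Finset.univ : Finset (Fin n))) (f := fun q => |v q|)
    have h2 : ‖v‖ ^ 2 = ∑ q, |v q| ^ 2 := by
      rw [EuclideanSpace.norm_eq, Real.sq_sqrt (Finset.sum_nonneg fun q _ => sq_nonneg _)]
      simp [Real.norm_eq_abs]
    rw [h2]
    simpa using h1
  -- Taylor remainders
  set R : Fin n → EuclideanSpace ℝ (Fin n) → ℝ := fun p y =>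
    f y p - f (x 0) p - fderiv ℝ (fun z => f z p) (x 0) (y - x 0) with hRdef
  have hRb : ∀ p : Fin n, ∀ y ∈ K, |R p y| ≤ β / 2 * ((n:ℝ) * ‖y - x 0‖ ^ 2) := by
    intro p y hy
    refine (taylor_bound U hU K hKc hσU _ (hfp p) β (fun ξ hξ q r => hβ ξ hξ p q r)
      (x 0) y (hxK 0) hy).trans ?_
    exact mul_le_mul_of_nonneg_left (hL _) (by positivity)
  -- convex combination of differences
  have hsumv : ∑ j, lam j • (x j - x 0) = xb - x 0 := by
    rw [hxbdef]
    rw [Finset.sum_congr rfl (fun j _ => smul_sub (lam j) (x j) (x 0)), Finset.sum_sub_distrib,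
      ← Finset.sum_smul, hlam1, one_smul]
  -- key interpolation identity
  have hkey : ∀ p : Fin n, f xb p - ∑ j, lam j * f (x j) p
      = R p xb - ∑ j, lam j * R p (x j) := by
    intro p
    have hD : (fderiv ℝ (fun z => f z p) (x 0)) (xb - x 0)
        = ∑ j, lam j * (fderiv ℝ (fun z => f z p) (x 0)) (x j - x 0) := by
      rw [← hsumv]
      rw [map_sum]
      simp
    have h1 : ∑ j, lam j * f (x 0) p = f (x 0) p := by
      rw [← Finset.sum_mul, hlam1, one_mul]
    have hexp : ∑ j, lam j * R p (x j)
        = (∑ j, lam j * f (x j) p) - f (x 0) p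
          - (fderiv ℝ (fun z => f z p) (x 0)) (xb - x 0) := by
      calc ∑ j, lam j * R p (x j)
          = ∑ j, (lam j * f (x j) p - lam j * f (x 0) p
              - lam j * (fderiv ℝ (fun z => f z p) (x 0)) (x j - x 0)) := by
            refine Finset.sum_congr rfl fun j _ => ?_
            simp only [hRdef]
            ring
        _ = (∑ j, lam j * f (x j) p) - (∑ j, lam j * f (x 0) p)
            - ∑ j, lam j * (fderiv ℝ (fun z => f z p) (x 0)) (x j - x 0) := by
            rw [Finset.sum_sub_distrib, Finset.sum_sub_distrib]
        _ = (∑ j, lam j * f (x j) p) - f (x 0) p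
            - (fderiv ℝ (fun z => f z p) (x 0)) (xb - x 0) := by rw [h1, hD]
    rw [hexp]
    ring
  -- norms
  set N : Fin (n+1) → ℝ := fun j => ‖x j - x 0‖ with hNdef
  set S := ∑ j, lam j * N j with hSdef
  have hS0 : 0 ≤ S := Finset.sum_nonneg fun j _ => mul_nonneg (hlam0 j) (norm_nonneg _)
  have hSM : S ≤ M := by
    calc S ≤ ∑ j, lam j * M :=
          Finset.sum_le_sum fun j _ => mul_le_mul_of_nonneg_left (hM j) (hlam0 j)
      _ = M := by rw [← Finset.sum_mul, hlam1, one_mul]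
  have hxbN : ‖xb - x 0‖ ≤ S := by
    rw [← hsumv]
    refine (norm_sum_le _ _).trans ?_
    refine le_of_eq (Finset.sum_congr rfl fun j _ => ?_)
    rw [norm_smul, Real.norm_eq_abs, abs_of_nonneg (hlam0 j)]
  -- sum of simplex constants
  have hc : ∑ j, lam j * simplexConst x j
      = (n:ℝ)/2 * (M * S + ∑ j, lam j * N j ^ 2) := by
    have : ∀ j : Fin (n+1), lam j * simplexConst x j
        = (n:ℝ)/2 * (M * (lam j * N j) + lam j * N j ^ 2) := by
      intro j
      simp only [simplexConst, ← hMdef, hNdef]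
      ring
    rw [Finset.sum_congr rfl fun j _ => this j, ← Finset.mul_sum]
    congr 1
    rw [Finset.sum_add_distrib, ← Finset.mul_sum, ← hSdef]
  -- total remainder bound
  have hRtot : ∀ p : Fin n, |R p xb - ∑ j, lam j * R p (x j)|
      ≤ β * ∑ j, lam j * simplexConst x j := by
    intro p
    have h1 : |R p xb - ∑ j, lam j * R p (x j)| ≤ |R p xb| + ∑ j, lam j * |R p (x j)| := by
      refine (abs_sub _ _).trans ?_
      gcongr
      refine (Finset.abs_sum_le_sum_abs _ _).trans ?_
      refine le_of_eq (Finset.sum_congr rfl fun j _ => ?_)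
      rw [abs_mul, abs_of_nonneg (hlam0 j)]
    refine h1.trans ?_
    have h2 : |R p xb| ≤ β/2 * ((n:ℝ) * (M * S)) := by
      refine (hRb p xb hxbK).trans ?_
      have h4 : ‖xb - x 0‖ ^ 2 ≤ M * S := by
        nlinarith [norm_nonneg (xb - x 0)]
      exact mul_le_mul_of_nonneg_left
        (mul_le_mul_of_nonneg_left h4 (Nat.cast_nonneg n)) (by positivity)
    have h3 : ∑ j, lam j * |R p (x j)| ≤ β/2 * ((n:ℝ) * ∑ j, lam j * N j ^ 2) := by
      calc ∑ j, lam j * |R p (x j)|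
          ≤ ∑ j, lam j * (β/2 * ((n:ℝ) * N j ^ 2)) :=
            Finset.sum_le_sum fun j _ =>
              mul_le_mul_of_nonneg_left (hRb p (x j) (hxK j)) (hlam0 j)
        _ = β/2 * ((n:ℝ) * ∑ j, lam j * N j ^ 2) := by
            rw [Finset.mul_sum, Finset.mul_sum]
            exact Finset.sum_congr rfl fun j _ => by ring
    rw [hc]
    calc |R p xb| + ∑ j, lam j * |R p (x j)|
        ≤ β/2 * ((n:ℝ) * (M * S)) + β/2 * ((n:ℝ) * ∑ j, lam j * N j ^ 2) := add_le_add h2 h3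
      _ = β * ((n:ℝ)/2 * (M * S + ∑ j, lam j * N j ^ 2)) := by ring
  -- drift term bound
  set D0 := β * ∑ j, lam j * simplexConst x j with hD0def
  have hc0 : ∀ j, 0 ≤ simplexConst x j := by
    intro j
    simp only [simplexConst]
    have := hM j
    have := norm_nonneg (x j - x 0)
    positivity
  have hD00 : 0 ≤ D0 :=
    mul_nonneg hβ0 (Finset.sum_nonneg fun j _ => mul_nonneg (hlam0 j) (hc0 j))
  have hswap : ∑ j, lam j * ∑ k, w k * f (x j) k
      = ∑ k, w k * ∑ j, lam j * f (x j) k := by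
    calc ∑ j, lam j * ∑ k, w k * f (x j) k
        = ∑ j, ∑ k, w k * (lam j * f (x j) k) := by
          refine Finset.sum_congr rfl fun j _ => ?_
          rw [Finset.mul_sum]
          exact Finset.sum_congr rfl fun k _ => by ring
      _ = ∑ k, ∑ j, w k * (lam j * f (x j) k) := Finset.sum_comm
      _ = ∑ k, w k * ∑ j, lam j * f (x j) k := by
          refine Finset.sum_congr rfl fun k _ => ?_
          rw [Finset.mul_sum]
  have hT1 : ∑ k, w k * f xb k
      ≤ (∑ j, lam j * ∑ k, w k * f (x j) k) + lhat * D0 := by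
    have hdiff : ∑ k, w k * f xb k - ∑ j, lam j * ∑ k, w k * f (x j) k
        = ∑ k, w k * (R k xb - ∑ j, lam j * R k (x j)) := by
      rw [hswap, ← Finset.sum_sub_distrib]
      refine Finset.sum_congr rfl fun k _ => ?_
      rw [← mul_sub, hkey k]
    have habs : ∑ k, w k * (R k xb - ∑ j, lam j * R k (x j)) ≤ lhat * D0 := by
      calc ∑ k, w k * (R k xb - ∑ j, lam j * R k (x j))
          ≤ ∑ k, |w k| * D0 := by
            refine Finset.sum_le_sum fun k _ => ?_
            refine (le_abs_self _).trans ?_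
            rw [abs_mul]
            exact mul_le_mul_of_nonneg_left (hRtot k) (abs_nonneg _)
        _ = (∑ k, |w k|) * D0 := (Finset.sum_mul _ _ _).symm
        _ ≤ lhat * D0 := mul_le_mul_of_nonneg_right hlhat hD00
    linarith
  -- input term bound
  have hrow : ∀ k : Fin n, |∑ i, G xb k i * u i| ≤ ghat * uhat := by
    intro k
    calc |∑ i, G xb k i * u i| ≤ ∑ i, |G xb k i| * uhat := by
          refine (Finset.abs_sum_le_sum_abs _ _).trans (Finset.sum_le_sum fun i _ => ?_)
          rw [abs_mul]
          exact mul_le_mul_of_nonneg_left (hu i) (abs_nonneg _)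
      _ = (∑ i, |G xb k i|) * uhat := (Finset.sum_mul _ _ _).symm
      _ ≤ ghat * uhat := by
          refine mul_le_mul_of_nonneg_right ?_ huhat.le
          refine le_trans ?_ (hghat xb hxbK)
          exact le_ciSup (f := fun i => ∑ j2, |G xb i j2|)
            (Set.Finite.bddAbove (Set.finite_range _)) k
  have hT2 : ∑ k, w k * (G xb).mulVec u k ≤ lhat * (ghat * uhat) := by
    calc ∑ k, w k * (G xb).mulVec u k
        ≤ ∑ k, |w k| * (ghat * uhat) := by
          refine Finset.sum_le_sum fun k _ => ?_
          have hmv : (G xb).mulVec u k = ∑ i, G xb k i * u i := by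
            simp [Matrix.mulVec, dotProduct]
          rw [hmv]
          refine (le_abs_self _).trans ?_
          rw [abs_mul]
          exact mul_le_mul_of_nonneg_left (hrow k) (abs_nonneg _)
      _ = (∑ k, |w k|) * (ghat * uhat) := (Finset.sum_mul _ _ _).symm
      _ ≤ lhat * (ghat * uhat) :=
          mul_le_mul_of_nonneg_right hlhat (mul_nonneg hghat0 huhat.le)
  -- assemble
  have hsplitgoal : ∑ k, w k * (f xb k + (G xb).mulVec u k)
      = (∑ k, w k * f xb k) + ∑ k, w k * (G xb).mulVec u k := by
    rw [← Finset.sum_add_distrib]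
    exact Finset.sum_congr rfl fun k _ => mul_add _ _ _
  have hfinal : (∑ j, lam j * ∑ k, w k * f (x j) k) + lhat * D0 + lhat * (ghat * uhat)
      ≤ -b₂ := by
    have hexp2 : ∑ j, lam j * ((∑ k, w k * f (x j) k)
          + lhat * (β * simplexConst x j + ghat * uhat))
        = (∑ j, lam j * ∑ k, w k * f (x j) k) + lhat * D0 + lhat * (ghat * uhat) := by
      calc ∑ j, lam j * ((∑ k, w k * f (x j) k)
              + lhat * (β * simplexConst x j + ghat * uhat))
          = ∑ j, (lam j * ∑ k, w k * f (x j) k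
              + lhat * β * (lam j * simplexConst x j) + lhat * (ghat * uhat) * lam j) := by
            refine Finset.sum_congr rfl fun j _ => ?_
            ring
        _ = (∑ j, lam j * ∑ k, w k * f (x j) k)
            + lhat * β * (∑ j, lam j * simplexConst x j)
            + lhat * (ghat * uhat) * ∑ j, lam j := by
            rw [Finset.sum_add_distrib, Finset.sum_add_distrib, ← Finset.mul_sum,
              ← Finset.mul_sum]
        _ = (∑ j, lam j * ∑ k, w k * f (x j) k) + lhat * D0 + lhat * (ghat * uhat) := by
            rw [hlam1, hD0def]
            ring
    rw [← hexp2]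
    calc ∑ j, lam j * ((∑ k, w k * f (x j) k)
            + lhat * (β * simplexConst x j + ghat * uhat))
        ≤ ∑ j, lam j * (-b₂) := by
          refine Finset.sum_le_sum fun j _ => ?_
          refine mul_le_mul_of_nonneg_left ?_ (hlam0 j)
          have := hvert j
          have hcm : ∑ k, w k * f (x j) k = ∑ k, f (x j) k * w k :=
            Finset.sum_congr rfl fun k _ => mul_comm _ _
          rw [hcm]
          exact this
      _ = -b₂ := by rw [← Finset.sum_mul, hlam1, one_mul]
  rw [hsplitgoal]
  linarith
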